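/- Let V be a finite-dimensional real vector space, D ⊆ V ⊕ V* maximally isotropic, Φ ⊆ V a subspace with annihilator Φ⁰ ⊆ V*, and S = {0} ⊕ Φ⁰ ⊆ V ⊕ V*. Set D^S := (D ∩ S⊥) + S. Then D^S + (V ⊕ {0}) = V ⊕ V* if and only if (D + ({0} ⊕ Φ⁰)) ∩ (Φ ⊕ {0}) = {0}. -/

import Mathlib

/-- The orthogonal complement of a subspace `E ⊆ V ⊕ V*` with respect to the canonical
symmetric pairing `⟨(X,ξ),(Y,ζ)⟩ = ζ(X) + ξ(Y)`. -/
def perp {V : Type*} [AddCommGroup V] [Module ℝ V]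
    (E : Submodule ℝ (V × Module.Dual ℝ V)) :
    Submodule ℝ (V × Module.Dual ℝ V) where
  carrier := {p | ∀ q ∈ E, q.2 p.1 + p.2 q.1 = 0}
  add_mem' := by
    intro a b ha hb q hq
    have h1 := ha q hq
    have h2 := hb q hq
    simp only [Prod.fst_add, Prod.snd_add, map_add, LinearMap.add_apply]
    linarith
  zero_mem' := by
    intro q hq
    simp
  smul_mem' := by
    intro c a ha q hq
    have h := ha q hq
    simp only [Prod.smul_fst, Prod.smul_snd, map_smul, LinearMap.smul_apply, smul_eq_mul]
    rw [← mul_add, h, mul_zero]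

section Aux

variable {V : Type*} [AddCommGroup V] [Module ℝ V]

noncomputable def pairB : LinearMap.BilinForm ℝ (V × Module.Dual ℝ V) :=
  LinearMap.mk₂ ℝ (fun p q => q.2 p.1 + p.2 q.1)
    (by intro p p' q; simp; ring)
    (by intro c p q; simp; ring)
    (by intro p q q'; simp; ring)
    (by intro c p q; simp; ring)

@[simp] lemma pairB_apply (p q : V × Module.Dual ℝ V) :
    pairB p q = q.2 p.1 + p.2 q.1 := rfl

lemma pairB_refl : (pairB (V := V)).IsRefl := by
  intro p q h
  simp only [pairB_apply] at *
  linarith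

lemma perp_eq (E : Submodule ℝ (V × Module.Dual ℝ V)) :
    perp E = (pairB).orthogonal E := by
  ext p
  constructor
  · intro h q hq
    have := h q hq
    simp only [LinearMap.BilinForm.IsOrtho, pairB_apply]
    linarith
  · intro h q hq
    have := h q hq
    simp only [LinearMap.BilinForm.IsOrtho, pairB_apply] at this
    linarith

variable [FiniteDimensional ℝ V]

lemma pairB_nondegenerate : (pairB (V := V)).Nondegenerate := by
  refine (LinearMap.IsRefl.nondegenerate_iff_separatingLeft (B := pairB (V := V)) (pairB_refl (V := V))).mpr ?_
  intro p h
  have h1 : p.2 = 0 := by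
    ext y
    have := h (y, 0)
    simpa using this
  have h2 : p.1 = 0 := by
    rw [← Module.forall_dual_apply_eq_zero_iff ℝ p.1]
    intro φ
    have := h (0, φ)
    simpa using this
  exact Prod.ext h2 h1

lemma perp_perp (E : Submodule ℝ (V × Module.Dual ℝ V)) : perp (perp E) = E := by
  rw [perp_eq, perp_eq]
  exact LinearMap.BilinForm.orthogonal_orthogonal pairB_nondegenerate pairB_refl E

lemma perp_sup (A C : Submodule ℝ (V × Module.Dual ℝ V)) :
    perp (A ⊔ C) = perp A ⊓ perp C := by
  ext p
  simp only [Submodule.mem_inf]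
  constructor
  · intro h
    exact ⟨fun q hq => h q (Submodule.mem_sup_left hq),
           fun q hq => h q (Submodule.mem_sup_right hq)⟩
  · rintro ⟨hA, hC⟩ q hq
    rcases Submodule.mem_sup.mp hq with ⟨a, ha, c, hc, rfl⟩
    have := hA a ha
    have := hC c hc
    simp only [Prod.fst_add, Prod.snd_add, map_add, LinearMap.add_apply]
    linarith

lemma perp_inf (A C : Submodule ℝ (V × Module.Dual ℝ V)) :
    perp (A ⊓ C) = perp A ⊔ perp C := by
  conv_lhs => rw [← perp_perp A, ← perp_perp C, ← perp_sup, perp_perp]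

lemma perp_S (Φ : Submodule ℝ V) :
    perp (Submodule.prod (⊥ : Submodule ℝ V) Φ.dualAnnihilator) =
      Submodule.prod Φ (⊤ : Submodule ℝ (Module.Dual ℝ V)) := by
  ext p
  simp only [Submodule.mem_prod, Submodule.mem_top, and_true]
  constructor
  · intro h
    have : p.1 ∈ Φ.dualAnnihilator.dualCoannihilator := by
      rw [Submodule.mem_dualCoannihilator]
      intro φ hφ
      have := h (0, φ) (by simp [Submodule.mem_prod, hφ])
      simpa using this
    rwa [Subspace.dualAnnihilator_dualCoannihilator_eq] at this
  · intro h q hq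
    rw [Submodule.mem_prod] at hq
    have hq1 : q.1 = 0 := by simpa using hq.1
    have := Submodule.mem_dualAnnihilator q.2 |>.mp hq.2 p.1 h
    simp [hq1, this]

lemma perp_VT :
    perp (Submodule.prod (⊤ : Submodule ℝ V) (⊥ : Submodule ℝ (Module.Dual ℝ V))) =
      Submodule.prod (⊤ : Submodule ℝ V) (⊥ : Submodule ℝ (Module.Dual ℝ V)) := by
  ext p
  simp only [Submodule.mem_prod, Submodule.mem_top, true_and, Submodule.mem_bot]
  constructor
  · intro h
    ext y
    have := h (y, 0) (by simp)
    simpa using this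
  · intro h q hq
    rw [Submodule.mem_prod, Submodule.mem_bot] at hq
    simp [h, hq.2]

end Aux

/-- Let `V` be a finite-dimensional real vector space, `D ⊆ V ⊕ V*`
maximally isotropic, `Φ ⊆ V` a subspace with annihilator `Φ⁰ ⊆ V*`, and
`S = {0} ⊕ Φ⁰`. Set `D^S := (D ∩ S⊥) + S`. Then `D^S + (V ⊕ {0}) = V ⊕ V*` if and
only if `(D + ({0} ⊕ Φ⁰)) ∩ (Φ ⊕ {0}) = {0}`. -/
theorem stmt_9 {V : Type*} [AddCommGroup V] [Module ℝ V] [FiniteDimensional ℝ V]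
    (D : Submodule ℝ (V × Module.Dual ℝ V)) (Φ : Submodule ℝ V)
    (hD : perp D = D) :
    ((D ⊓ perp (Submodule.prod (⊥ : Submodule ℝ V) Φ.dualAnnihilator)) ⊔
        Submodule.prod (⊥ : Submodule ℝ V) Φ.dualAnnihilator) ⊔
      Submodule.prod (⊤ : Submodule ℝ V) (⊥ : Submodule ℝ (Module.Dual ℝ V)) = ⊤ ↔
    (D ⊔ Submodule.prod (⊥ : Submodule ℝ V) Φ.dualAnnihilator) ⊓
      Submodule.prod Φ (⊥ : Submodule ℝ (Module.Dual ℝ V)) = ⊥ := by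
  set S := Submodule.prod (⊥ : Submodule ℝ V) Φ.dualAnnihilator
  set X := ((D ⊓ perp S) ⊔ S) ⊔
      Submodule.prod (⊤ : Submodule ℝ V) (⊥ : Submodule ℝ (Module.Dual ℝ V))
  have hperpX : perp X = (D ⊔ S) ⊓ Submodule.prod Φ (⊥ : Submodule ℝ (Module.Dual ℝ V)) := by
    have hS : perp (perp S) = S := perp_perp S
    calc perp X = (perp (D ⊓ perp S) ⊓ perp S) ⊓
          perp (Submodule.prod (⊤ : Submodule ℝ V) (⊥ : Submodule ℝ (Module.Dual ℝ V))) := by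
          rw [show X = ((D ⊓ perp S) ⊔ S) ⊔ _ from rfl, perp_sup, perp_sup]
      _ = ((D ⊔ S) ⊓ Submodule.prod Φ (⊤ : Submodule ℝ (Module.Dual ℝ V))) ⊓
          Submodule.prod (⊤ : Submodule ℝ V) (⊥ : Submodule ℝ (Module.Dual ℝ V)) := by
          rw [perp_inf, hD, hS, perp_S, perp_VT]
      _ = (D ⊔ S) ⊓ Submodule.prod Φ (⊥ : Submodule ℝ (Module.Dual ℝ V)) := by
          rw [inf_assoc, Submodule.prod_inf_prod, inf_top_eq, top_inf_eq]
  rw [← hperpX]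
  constructor
  · intro h
    rw [h, perp_eq]
    exact LinearMap.BilinForm.orthogonal_top_eq_bot pairB_nondegenerate
  · intro h
    have := perp_perp X
    rw [h] at this
    rw [← this]
    ext p
    simp only [Submodule.mem_top, iff_true]
    intro q hq
    rw [Submodule.mem_bot] at hq
    simp [hq]
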